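/- Let N be an odd squarefree positive integer, let ℓ be a divisor of N with ℓ > 1, let m be a divisor of N, and set ε := (−1)^((ℓ−1)/2). Let n > 0 be an integer such that −εn = D_{ℓ,n}·f_n² with D_{ℓ,n} a fundamental discriminant and f_n ≥ 1. Then Σ_{d | f_n, gcd(d,N)=1} μ(d)·(d/ℓ)·(D_{ℓ,n}/d)·σ_{m,N,1}(f_n/d) = (∏_{p prime, p | N/m} f_p) · (∏_{p prime, p | f_n, p ∤ N} D_p(ℓ,n)), where D_p(ℓ,n) := σ₁(f_p) − σ₁(f_p/p)·(D_{ℓ,n}/p)·(p/ℓ) with σ₁(f_p/p) := 0 if p ∤ f_p. -/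

import Mathlib

open scoped BigOperators

/-- The Kronecker symbol `(D/p)` at a prime `p`. -/
def kronP (D : ℤ) (p : ℕ) : ℤ :=
  if p = 2 then
    if D % 2 = 0 then 0 else if D % 8 = 1 ∨ D % 8 = 7 then 1 else -1
  else jacobiSym D p

/-- The Kronecker symbol `(D/m)` for positive `m`: the completely multiplicative
function of `m` determined by its values at primes. -/
def kron (D : ℤ) (m : ℕ) : ℤ :=
  m.factorization.prod fun p k => kronP D p ^ k

/-- Fundamental discriminant: `1`, or squarefree `≡ 1 (mod 4)`, or `4k` with
`k ≡ 2, 3 (mod 4)` squarefree. -/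
def IsFundDisc (D : ℤ) : Prop :=
  D = 1 ∨ (D % 4 = 1 ∧ Squarefree D) ∨
    ∃ k : ℤ, D = 4 * k ∧ (k % 4 = 2 ∨ k % 4 = 3) ∧ Squarefree k

/-- The decomposition `a = D·f²` with `D` a fundamental discriminant, `f ≥ 1`. -/
noncomputable def fdpair (a : ℤ) : ℤ × ℕ := by
  classical
  exact if h : ∃ p : ℤ × ℕ, IsFundDisc p.1 ∧ 1 ≤ p.2 ∧ a = p.1 * (p.2 : ℤ) ^ 2
    then h.choose else (0, 0)

/-- `D_n`, the fundamental discriminant with `-n = D_n · f_n²`. -/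
noncomputable def Dn (n : ℕ) : ℤ := (fdpair (-(n : ℤ))).1

/-- `f_n`, the conductor with `-n = D_n · f_n²`. -/
noncomputable def fn (n : ℕ) : ℕ := (fdpair (-(n : ℤ))).2

/-- `f_p := p^(v_p f)`, the `p`-part of `f`. -/
def ppart (f p : ℕ) : ℕ := p ^ f.factorization p

/-- The weight `w(a,b,c)` in the definition of the Hurwitz class number. -/
def hurwitzW (a b c : ℤ) : ℚ :=
  if a = b ∧ b = c then 3 else if b = 0 ∧ a = c then 2 else 1

/-- The Hurwitz class number `H(n)`: `H(0) = -1/12`, and for `n > 0` the weighted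
count of reduced forms of discriminant `-n` (automatically `0` for `n ≡ 1, 2 mod 4`). -/
noncomputable def hurwitz (n : ℕ) : ℚ :=
  if n = 0 then -(1 / 12)
  else
    ∑ a ∈ Finset.Icc (1 : ℤ) (n : ℤ), ∑ b ∈ Finset.Icc (-(n : ℤ)) (n : ℤ),
      ∑ c ∈ Finset.Icc (1 : ℤ) ((n : ℤ) ^ 2 + (n : ℤ)),
        if b ^ 2 - 4 * a * c = -(n : ℤ) ∧ |b| ≤ a ∧ a ≤ c ∧ ((|b| = a ∨ a = c) → 0 ≤ b)
        then (hurwitzW a b c)⁻¹ else 0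

/-- `L(0, χ_D) = -(1/|D|) Σ_{a=1}^{|D|} (D/a) a` for a fundamental discriminant `D < 0`. -/
noncomputable def Lval (D : ℤ) : ℚ :=
  -(1 / (D.natAbs : ℚ)) * ∑ a ∈ Finset.Icc 1 D.natAbs, (kron D a : ℚ) * (a : ℚ)

/-- `L_m(0, χ_D) = L(0,χ_D) ∏_{p ∣ m} (1 - (D/p))`. -/
noncomputable def LvalM (m : ℕ) (D : ℤ) : ℚ :=
  Lval D * ∏ p ∈ m.primeFactors, (1 - (kron D p : ℚ))

/-- `σ_{m,N,1}(r) = Σ_{d ∣ r, gcd(d,m)=1, gcd(r/d, N/m)=1} d`. -/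
def sigmaMN (m N r : ℕ) : ℕ :=
  ∑ d ∈ r.divisors, if Nat.gcd d m = 1 ∧ Nat.gcd (r / d) (N / m) = 1 then d else 0

/-- The Pei–Wang generalized Hurwitz class number `H_{m,N}(n)`. -/
noncomputable def HPW (m N n : ℕ) : ℚ :=
  if n = 0 then
    if m = N then -(1 / 12) * ∏ p ∈ N.primeFactors, (1 - (p : ℚ)) else 0
  else if n % 4 = 0 ∨ n % 4 = 3 then
    LvalM m (Dn n) *
      (∏ p ∈ (N / m).primeFactors,
        (1 - (kron (Dn n) p : ℚ) / (p : ℚ)) / (1 - ((p : ℚ)⁻¹) ^ 2)) *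
      ∑ a ∈ (fn n).divisors,
        if Nat.gcd a N = 1 then
          (ArithmeticFunction.moebius a : ℚ) * (kron (Dn n) a : ℚ) *
            (sigmaMN m N (fn n / a) : ℚ)
        else 0
  else 0

/-- The Li–Skoruppa–Zhou modified class number `H^{(N₁,N₂)}(n)`. -/
noncomputable def HLSZ (N₁ N₂ n : ℕ) : ℚ :=
  if n = 0 then
    -(1 / 12) * (∏ p ∈ N₁.primeFactors, (1 - (p : ℚ))) *
      ∏ p ∈ N₂.primeFactors, ((p : ℚ) + 1)
  else if n % 4 = 0 ∨ n % 4 = 3 then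
    hurwitz (n / (∏ p ∈ (N₁ * N₂).primeFactors, ppart (fn n) p) ^ 2) *
      (∏ p ∈ N₁.primeFactors, (1 - (kron (Dn n) p : ℚ))) *
      ∏ p ∈ N₂.primeFactors,
        ((2 * (p : ℚ) * (ppart (fn n) p : ℚ) - (p : ℚ) - 1 -
            (kron (Dn n) p : ℚ) * (2 * (ppart (fn n) p : ℚ) - (p : ℚ) - 1)) /
          ((p : ℚ) - 1))
  else 0

/-- Number of distinct prime divisors, `ω(N)`. -/
def omegaN (N : ℕ) : ℕ := N.primeFactors.card

/-- The local factor `A_p(n)`, for `-n = D·f²`. -/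
noncomputable def locA (D : ℤ) (f p : ℕ) : ℚ :=
  (ppart f p : ℚ) * (1 - (kron D p : ℚ) / (p : ℚ)) / (1 - ((p : ℚ)⁻¹) ^ 2)

/-- The local factor `B_p(n)`, for `-n = D·f²`. -/
noncomputable def locB (D : ℤ) (f p : ℕ) : ℚ :=
  (2 * (p : ℚ) * (ppart f p : ℚ) - (p : ℚ) - 1 -
      (kron D p : ℚ) * (2 * (ppart f p : ℚ) - (p : ℚ) - 1)) / ((p : ℚ) - 1)

/-- The local factor `C_p(n)`, for `-n = D·f²`. -/
noncomputable def locC (D : ℤ) (p : ℕ) : ℚ := 1 - (kron D p : ℚ)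

/-- The local factor `D_p(n) = σ₁(f_p) - σ₁(f_p/p)·(D/p)`, for `-n = D·f²`. -/
noncomputable def locD (D : ℤ) (f p : ℕ) : ℚ :=
  (ArithmeticFunction.sigma 1 (ppart f p) : ℚ) -
    (ArithmeticFunction.sigma 1 (ppart f p / p) : ℚ) * (kron D p : ℚ)

/-- The character local factor `D_p(ℓ,n) = σ₁(f_p) - σ₁(f_p/p)·(D_{ℓ,n}/p)·(p/ℓ)`. -/
noncomputable def locDchar (l : ℕ) (D : ℤ) (f p : ℕ) : ℚ :=
  (ArithmeticFunction.sigma 1 (ppart f p) : ℚ) -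
    (ArithmeticFunction.sigma 1 (ppart f p / p) : ℚ) * (kron D p : ℚ) *
      (jacobiSym (p : ℤ) l : ℚ)

/-- The Pei–Wang generalized class number `H(ℓ, m, N; n)` with character `χ_ℓ`. -/
noncomputable def HPWchar (l m N n : ℕ) : ℚ := by
  classical
  exact
    if n = 0 then
      if m = N then -(1 / 12) * ∏ p ∈ N.primeFactors, (1 - (p : ℚ)) else 0
    else if (∃ q : ℤ × ℕ, IsFundDisc q.1 ∧ 1 ≤ q.2 ∧
            -(((-1 : ℤ) ^ ((l - 1) / 2)) * (n : ℤ)) = q.1 * (q.2 : ℤ) ^ 2) ∧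
        (∃ q : ℤ × ℕ, IsFundDisc q.1 ∧ 1 ≤ q.2 ∧
            -((l : ℤ) * (n : ℤ)) = q.1 * (q.2 : ℤ) ^ 2) then
      LvalM m (fdpair (-((l : ℤ) * (n : ℤ)))).1 *
        (∏ p ∈ (N / m).primeFactors,
          (1 - (kron (fdpair (-((l : ℤ) * (n : ℤ)))).1 p : ℚ) / (p : ℚ)) /
            (1 - ((p : ℚ)⁻¹) ^ 2)) *
        ((Int.gcd (l : ℤ) (fdpair (-(((-1 : ℤ) ^ ((l - 1) / 2)) * (n : ℤ)))).1 : ℚ) /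
          (Nat.gcd (Int.gcd (l : ℤ) (fdpair (-(((-1 : ℤ) ^ ((l - 1) / 2)) * (n : ℤ)))).1) m : ℚ)) *
        ∑ a ∈ (fdpair (-(((-1 : ℤ) ^ ((l - 1) / 2)) * (n : ℤ)))).2.divisors,
          if Nat.gcd a N = 1 then
            (ArithmeticFunction.moebius a : ℚ) *
              (kron (fdpair (-(((-1 : ℤ) ^ ((l - 1) / 2)) * (n : ℤ)))).1 a : ℚ) *
              (jacobiSym (a : ℤ) l : ℚ) *
              (sigmaMN m N ((fdpair (-(((-1 : ℤ) ^ ((l - 1) / 2)) * (n : ℤ)))).2 / a) : ℚ)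
          else 0
    else 0

section AuxLemmas

open ArithmeticFunction

lemma kron_one' (D : ℤ) : kron D 1 = 1 := by simp [kron]

lemma kron_mul' (D : ℤ) {a b : ℕ} (ha : a ≠ 0) (hb : b ≠ 0) :
    kron D (a * b) = kron D a * kron D b := by
  unfold kron
  rw [Nat.factorization_mul ha hb]
  exact Finsupp.prod_add_index' (fun p => pow_zero _) (fun p k1 k2 => pow_add _ _ _)

/-- The Möbius–Jacobi–Kronecker arithmetic function. -/
def GFa (N l : ℕ) (D : ℤ) : ArithmeticFunction ℚ :=
  ⟨fun d => if Nat.gcd d N = 1 then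
      (ArithmeticFunction.moebius d : ℚ) * (jacobiSym (d : ℤ) l : ℚ) * (kron D d : ℚ)
    else 0, by simp⟩

/-- The identity-restricted arithmetic function. -/
def AFa (m : ℕ) : ArithmeticFunction ℚ :=
  ⟨fun d => if Nat.gcd d m = 1 then (d : ℚ) else 0, by simp⟩

/-- The indicator arithmetic function. -/
def BFa (k : ℕ) : ArithmeticFunction ℚ :=
  ⟨fun e => if e ≠ 0 ∧ Nat.gcd e k = 1 then 1 else 0, by simp⟩

lemma GFa_mult (N l : ℕ) (D : ℤ) : (GFa N l D).IsMultiplicative := by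
  constructor
  · simp [GFa, kron_one', jacobiSym.one_left]
  · intro a b hab
    simp only [GFa, ArithmeticFunction.coe_mk]
    rcases eq_or_ne a 0 with rfl | ha
    · simp
    rcases eq_or_ne b 0 with rfl | hb
    · simp
    have hiff : Nat.gcd (a * b) N = 1 ↔ Nat.gcd a N = 1 ∧ Nat.gcd b N = 1 :=
      Nat.coprime_mul_iff_left
    by_cases h1 : Nat.gcd a N = 1 <;> by_cases h2 : Nat.gcd b N = 1
    · rw [if_pos (hiff.mpr ⟨h1, h2⟩), if_pos h1, if_pos h2,
        isMultiplicative_moebius.map_mul_of_coprime hab, kron_mul' D ha hb]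
      push_cast [jacobiSym.mul_left]
      ring
    all_goals simp [hiff, h1, h2]

lemma AFa_mult (m : ℕ) : (AFa m).IsMultiplicative := by
  constructor
  · simp [AFa]
  · intro a b hab
    simp only [AFa, ArithmeticFunction.coe_mk]
    have hiff : Nat.gcd (a * b) m = 1 ↔ Nat.gcd a m = 1 ∧ Nat.gcd b m = 1 :=
      Nat.coprime_mul_iff_left
    by_cases h1 : Nat.gcd a m = 1 <;> by_cases h2 : Nat.gcd b m = 1 <;>
      simp [hiff, h1, h2]

lemma BFa_mult (k : ℕ) : (BFa k).IsMultiplicative := by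
  constructor
  · simp [BFa]
  · intro a b hab
    simp only [BFa, ArithmeticFunction.coe_mk]
    rcases eq_or_ne a 0 with rfl | ha
    · simp
    rcases eq_or_ne b 0 with rfl | hb
    · simp
    have hiff : Nat.gcd (a * b) k = 1 ↔ Nat.gcd a k = 1 ∧ Nat.gcd b k = 1 :=
      Nat.coprime_mul_iff_left
    by_cases h1 : Nat.gcd a k = 1 <;> by_cases h2 : Nat.gcd b k = 1 <;>
      simp [hiff, h1, h2, ha, hb, mul_ne_zero ha hb]

lemma HF_eq (m N : ℕ) {r : ℕ} (hr : r ≠ 0) :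
    (AFa m * BFa (N / m)) r = (sigmaMN m N r : ℚ) := by
  rw [ArithmeticFunction.mul_apply,
    Nat.sum_divisorsAntidiagonal (f := fun x y => AFa m x * BFa (N / m) y)]
  have hcast : (sigmaMN m N r : ℚ) =
      ∑ d ∈ r.divisors,
        if Nat.gcd d m = 1 ∧ Nat.gcd (r / d) (N / m) = 1 then (d : ℚ) else 0 := by
    unfold sigmaMN
    push_cast
    rfl
  rw [hcast]
  apply Finset.sum_congr rfl
  intro d hd
  have hd1 : d ∣ r := (Nat.mem_divisors.mp hd).1
  have h0 : r / d ≠ 0 := by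
    have hdpos : 0 < d := Nat.pos_of_mem_divisors hd
    have : 0 < r / d := Nat.div_pos (Nat.le_of_dvd (Nat.pos_of_ne_zero hr) hd1) hdpos
    omega
  simp only [AFa, BFa, ArithmeticFunction.coe_mk]
  by_cases h1 : Nat.gcd d m = 1 <;> by_cases h2 : Nat.gcd (r / d) (N / m) = 1 <;>
    simp [h1, h2, h0]

lemma sum_two_aux (t : ℕ → ℚ) (k : ℕ) (hk : 1 ≤ k) (h : ∀ i, 2 ≤ i → t i = 0) :
    ∑ i ∈ Finset.range (k + 1), t i = t 0 + t 1 := by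
  induction k with
  | zero => omega
  | succ k ih =>
    rcases Nat.lt_or_ge 1 (k + 1) with h1 | h1
    · rw [Finset.sum_range_succ, h _ (by omega), add_zero]
      exact ih (by omega)
    · have hk0 : k = 0 := by omega
      subst hk0
      simp [Finset.sum_range_succ]

lemma sigmaMN_pp_of_dvd_m {p m N : ℕ} (hp : p.Prime) (hpm : p ∣ m) (hpNm : ¬ p ∣ N / m)
    (k : ℕ) : sigmaMN m N (p ^ k) = 1 := by
  unfold sigmaMN
  rw [Nat.sum_divisors_prime_pow hp, Finset.sum_eq_single 0]
  · have h2 : Nat.gcd (p ^ k / p ^ 0) (N / m) = 1 := by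
      rw [pow_zero, Nat.div_one]
      exact Nat.Coprime.pow_left _ ((hp.coprime_iff_not_dvd).mpr hpNm)
    rw [if_pos ⟨by simp, h2⟩, pow_zero]
  · intro i _ hne
    have hgcd : ¬ Nat.gcd (p ^ i) m = 1 := by
      intro h
      have hpd : p ∣ Nat.gcd (p ^ i) m := Nat.dvd_gcd (dvd_pow_self p hne) hpm
      rw [h] at hpd
      have := Nat.le_of_dvd one_pos hpd
      have := hp.two_le
      omega
    rw [if_neg (by tauto)]
  · intro h
    exact absurd (Finset.mem_range.mpr (Nat.succ_pos k)) h

lemma sigmaMN_pp_of_dvd_Nm {p m N : ℕ} (hp : p.Prime) (hpm : ¬ p ∣ m) (hpNm : p ∣ N / m)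
    (k : ℕ) : sigmaMN m N (p ^ k) = p ^ k := by
  unfold sigmaMN
  rw [Nat.sum_divisors_prime_pow hp, Finset.sum_eq_single k]
  · have h1 : Nat.gcd (p ^ k) m = 1 :=
      Nat.Coprime.pow_left _ ((hp.coprime_iff_not_dvd).mpr hpm)
    have h2 : Nat.gcd (p ^ k / p ^ k) (N / m) = 1 := by
      rw [Nat.div_self (pow_pos hp.pos k)]
      exact Nat.gcd_one_left _
    rw [if_pos ⟨h1, h2⟩]
  · intro i hi hne
    have hik : i ≤ k := by
      have := Finset.mem_range.mp hi
      omega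
    have hdiv : p ^ k / p ^ i = p ^ (k - i) := Nat.pow_div hik hp.pos
    have hgcd : ¬ Nat.gcd (p ^ k / p ^ i) (N / m) = 1 := by
      rw [hdiv]
      intro h
      have hpd : p ∣ Nat.gcd (p ^ (k - i)) (N / m) :=
        Nat.dvd_gcd (dvd_pow_self p (by omega)) hpNm
      rw [h] at hpd
      have := Nat.le_of_dvd one_pos hpd
      have := hp.two_le
      omega
    rw [if_neg (by tauto)]
  · intro h
    exact absurd (Finset.mem_range.mpr (by omega)) h

lemma sigmaMN_pp_coprime {p m N : ℕ} (hp : p.Prime) (hpm : ¬ p ∣ m) (hpNm : ¬ p ∣ N / m)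
    (k : ℕ) : sigmaMN m N (p ^ k) = ArithmeticFunction.sigma 1 (p ^ k) := by
  unfold sigmaMN
  rw [ArithmeticFunction.sigma_one_apply]
  apply Finset.sum_congr rfl
  intro d hd
  have hd1 : d ∣ p ^ k := (Nat.mem_divisors.mp hd).1
  have hcm : Nat.gcd d m = 1 :=
    Nat.Coprime.coprime_dvd_left hd1 (Nat.Coprime.pow_left k ((hp.coprime_iff_not_dvd).mpr hpm))
  have hdvd2 : p ^ k / d ∣ p ^ k := ⟨d, (Nat.div_mul_cancel hd1).symm⟩
  have hcNm : Nat.gcd (p ^ k / d) (N / m) = 1 :=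
    Nat.Coprime.coprime_dvd_left hdvd2
      (Nat.Coprime.pow_left k ((hp.coprime_iff_not_dvd).mpr hpNm))
  rw [if_pos ⟨hcm, hcNm⟩]

lemma conv_pp (N l m : ℕ) (D : ℤ) {p : ℕ} (hp : p.Prime) {k : ℕ} (hk : 1 ≤ k) :
    (GFa N l D * (AFa m * BFa (N / m))) (p ^ k) =
      (sigmaMN m N (p ^ k) : ℚ) +
        (if Nat.gcd p N = 1 then
            -((jacobiSym (p : ℤ) l : ℚ) * (kron D p : ℚ)) else 0) *
          (sigmaMN m N (p ^ (k - 1)) : ℚ) := by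
  rw [ArithmeticFunction.mul_apply,
    Nat.sum_divisorsAntidiagonal (f := fun x y => GFa N l D x * (AFa m * BFa (N / m)) y),
    Nat.sum_divisors_prime_pow hp]
  rw [sum_two_aux (fun i => GFa N l D (p ^ i) * (AFa m * BFa (N / m)) (p ^ k / p ^ i)) k hk ?hvan]
  case hvan =>
    intro i hi
    have hmu : (ArithmeticFunction.moebius (p ^ i) : ℤ) = 0 := by
      rw [ArithmeticFunction.moebius_apply_prime_pow hp (by omega)]
      simp [show i ≠ 1 by omega]
    have : GFa N l D (p ^ i) = 0 := by
      simp only [GFa, ArithmeticFunction.coe_mk, hmu]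
      simp
    simp only [this, zero_mul]
  have ht0 : GFa N l D (p ^ 0) * (AFa m * BFa (N / m)) (p ^ k / p ^ 0) =
      (sigmaMN m N (p ^ k) : ℚ) := by
    rw [pow_zero, Nat.div_one, (GFa_mult N l D).map_one, one_mul,
      HF_eq m N (pow_ne_zero k hp.ne_zero)]
  have hdiv : p ^ k / p ^ 1 = p ^ (k - 1) := Nat.pow_div hk hp.pos
  have ht1 : GFa N l D (p ^ 1) * (AFa m * BFa (N / m)) (p ^ k / p ^ 1) =
      (if Nat.gcd p N = 1 then
          -((jacobiSym (p : ℤ) l : ℚ) * (kron D p : ℚ)) else 0) *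
        (sigmaMN m N (p ^ (k - 1)) : ℚ) := by
    rw [hdiv, HF_eq m N (pow_ne_zero _ hp.ne_zero), pow_one]
    congr 1
    simp only [GFa, ArithmeticFunction.coe_mk, ArithmeticFunction.moebius_apply_prime hp]
    split_ifs with h
    · push_cast
      ring
    · rfl
  rw [ht0, ht1]

end AuxLemmas

/-- Twisted Möbius–Kronecker divisor sum in terms of local parts. -/
theorem moebius_sum_local_char (N l m : ℕ) (hN : 0 < N) (hodd : Odd N)
    (hsf : Squarefree N) (hl : l ∣ N) (hl1 : 1 < l) (hm : m ∣ N) (n : ℕ) (hn : 0 < n)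
    (D : ℤ) (f : ℕ) (hD : IsFundDisc D) (hf : 1 ≤ f)
    (hDf : -(((-1 : ℤ) ^ ((l - 1) / 2)) * (n : ℤ)) = D * (f : ℤ) ^ 2) :
    (∑ d ∈ f.divisors,
        if Nat.gcd d N = 1 then
          (ArithmeticFunction.moebius d : ℚ) * (jacobiSym (d : ℤ) l : ℚ) *
            (kron D d : ℚ) * (sigmaMN m N (f / d) : ℚ)
        else 0) =
      (∏ p ∈ (N / m).primeFactors, (ppart f p : ℚ)) *
        ∏ p ∈ f.primeFactors.filter fun p => ¬p ∣ N, locDchar l D f p := by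
  classical
  have hf0 : f ≠ 0 := by omega
  have hN0 : N ≠ 0 := by omega
  have hm0 : m ≠ 0 := by rintro rfl; simp at hm; omega
  have hNm0 : N / m ≠ 0 := by
    have : 0 < N / m := Nat.div_pos (Nat.le_of_dvd hN hm) (Nat.pos_of_ne_zero hm0)
    omega
  have hNeq : m * (N / m) = N := Nat.mul_div_cancel' hm
  -- primes dividing m don't divide N/m
  have hexcl : ∀ p : ℕ, p.Prime → p ∣ m → ¬ p ∣ N / m := by
    intro p hp h1 h2
    have : p * p ∣ N := hNeq ▸ mul_dvd_mul h1 h2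
    have := hsf p this
    rw [Nat.isUnit_iff] at this
    have := hp.two_le
    omega
  have hsplit : ∀ p : ℕ, p.Prime → p ∣ N → ¬ p ∣ N / m → p ∣ m := by
    intro p hp h1 h2
    rcases (hp.dvd_mul.mp (hNeq ▸ h1)) with h | h
    · exact h
    · exact absurd h h2
  -- Step 1: the LHS is the Dirichlet convolution evaluated at f
  have key : (∑ d ∈ f.divisors,
        if Nat.gcd d N = 1 then
          (ArithmeticFunction.moebius d : ℚ) * (jacobiSym (d : ℤ) l : ℚ) *
            (kron D d : ℚ) * (sigmaMN m N (f / d) : ℚ)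
        else 0) = (GFa N l D * (AFa m * BFa (N / m))) f := by
    rw [ArithmeticFunction.mul_apply,
      Nat.sum_divisorsAntidiagonal (f := fun x y => GFa N l D x * (AFa m * BFa (N / m)) y)]
    apply Finset.sum_congr rfl
    intro d hd
    have hd1 : d ∣ f := (Nat.mem_divisors.mp hd).1
    have hfd : f / d ≠ 0 := by
      have : 0 < f / d :=
        Nat.div_pos (Nat.le_of_dvd (Nat.pos_of_ne_zero hf0) hd1) (Nat.pos_of_mem_divisors hd)
      omega
    rw [HF_eq m N hfd]
    simp only [GFa, ArithmeticFunction.coe_mk]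
    split_ifs with h
    · ring
    · rw [zero_mul]
  rw [key]
  have hmult : (GFa N l D * (AFa m * BFa (N / m))).IsMultiplicative :=
    (GFa_mult N l D).mul ((AFa_mult m).mul (BFa_mult (N / m)))
  rw [ArithmeticFunction.IsMultiplicative.multiplicative_factorization _ hmult hf0,
    Finsupp.prod, Nat.support_factorization]
  rw [← Finset.prod_filter_mul_prod_filter_not f.primeFactors (fun p => p ∣ N)]
  -- Part B : primes not dividing N
  have hB : (∏ p ∈ f.primeFactors.filter (fun p => ¬ p ∣ N),
        (GFa N l D * (AFa m * BFa (N / m))) (p ^ f.factorization p)) =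
      ∏ p ∈ f.primeFactors.filter (fun p => ¬ p ∣ N), locDchar l D f p := by
    apply Finset.prod_congr rfl
    intro p hp'
    obtain ⟨hpf, hpN⟩ := Finset.mem_filter.mp hp'
    have hp : p.Prime := Nat.prime_of_mem_primeFactors hpf
    have hk : 1 ≤ f.factorization p :=
      hp.factorization_pos_of_dvd hf0 (Nat.dvd_of_mem_primeFactors hpf)
    rw [conv_pp N l m D hp hk]
    have hgcd : Nat.gcd p N = 1 := (hp.coprime_iff_not_dvd).mpr hpN
    rw [if_pos hgcd]
    have hpm : ¬ p ∣ m := fun h => hpN (h.trans hm)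
    have hpNm : ¬ p ∣ N / m := fun h => hpN (h.trans (Nat.div_dvd_of_dvd hm))
    rw [sigmaMN_pp_coprime hp hpm hpNm, sigmaMN_pp_coprime hp hpm hpNm]
    have hdiv : p ^ f.factorization p / p = p ^ (f.factorization p - 1) := by
      have := Nat.pow_div hk hp.pos
      rwa [pow_one] at this
    unfold locDchar ppart
    rw [hdiv]
    ring
  rw [hB]
  -- Part A : primes dividing N
  have hA : (∏ p ∈ f.primeFactors.filter (fun p => p ∣ N),
        (GFa N l D * (AFa m * BFa (N / m))) (p ^ f.factorization p)) =
      ∏ p ∈ (N / m).primeFactors, (ppart f p : ℚ) := by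
    rw [← Finset.prod_filter_mul_prod_filter_not
      (f.primeFactors.filter (fun p => p ∣ N)) (fun p => p ∣ N / m)]
    have hone : (∏ p ∈ (f.primeFactors.filter (fun p => p ∣ N)).filter
        (fun p => ¬ p ∣ N / m),
          (GFa N l D * (AFa m * BFa (N / m))) (p ^ f.factorization p)) = 1 := by
      apply Finset.prod_eq_one
      intro p hp'
      obtain ⟨hp'', hpNm⟩ := Finset.mem_filter.mp hp'
      obtain ⟨hpf, hpN⟩ := Finset.mem_filter.mp hp''
      have hp : p.Prime := Nat.prime_of_mem_primeFactors hpf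
      have hk : 1 ≤ f.factorization p :=
        hp.factorization_pos_of_dvd hf0 (Nat.dvd_of_mem_primeFactors hpf)
      have hpm : p ∣ m := hsplit p hp hpN hpNm
      rw [conv_pp N l m D hp hk]
      have hgcd : ¬ Nat.gcd p N = 1 := by
        rw [Nat.gcd_eq_left hpN]
        exact hp.ne_one
      rw [if_neg hgcd, zero_mul, add_zero, sigmaMN_pp_of_dvd_m hp hpm hpNm]
      norm_num
    have hmain : (∏ p ∈ (f.primeFactors.filter (fun p => p ∣ N)).filter
        (fun p => p ∣ N / m),
          (GFa N l D * (AFa m * BFa (N / m))) (p ^ f.factorization p)) =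
        ∏ p ∈ (N / m).primeFactors, (ppart f p : ℚ) := by
      have hset : (f.primeFactors.filter (fun p => p ∣ N)).filter (fun p => p ∣ N / m) =
          f.primeFactors.filter (fun p => p ∣ N / m) := by
        rw [Finset.filter_filter]
        apply Finset.filter_congr
        intro p hpf
        constructor
        · exact fun h => h.2
        · exact fun h => ⟨h.trans (Nat.div_dvd_of_dvd hm), h⟩
      rw [hset]
      have hval : ∀ p ∈ f.primeFactors.filter (fun p => p ∣ N / m),
          (GFa N l D * (AFa m * BFa (N / m))) (p ^ f.factorization p) =
            (ppart f p : ℚ) := by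
        intro p hp'
        obtain ⟨hpf, hpNm⟩ := Finset.mem_filter.mp hp'
        have hp : p.Prime := Nat.prime_of_mem_primeFactors hpf
        have hk : 1 ≤ f.factorization p :=
          hp.factorization_pos_of_dvd hf0 (Nat.dvd_of_mem_primeFactors hpf)
        have hpm : ¬ p ∣ m := fun h => hexcl p hp h hpNm
        have hpN : p ∣ N := hpNm.trans (Nat.div_dvd_of_dvd hm)
        have hgcd : ¬ Nat.gcd p N = 1 := by
          rw [Nat.gcd_eq_left hpN]
          exact hp.ne_one
        rw [conv_pp N l m D hp hk, if_neg hgcd, zero_mul, add_zero,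
          sigmaMN_pp_of_dvd_Nm hp hpm hpNm]
        unfold ppart
        push_cast
        rfl
      rw [Finset.prod_congr rfl hval]
      apply Finset.prod_subset
      · intro p hp'
        obtain ⟨hpf, hpNm⟩ := Finset.mem_filter.mp hp'
        exact Nat.mem_primeFactors.mpr
          ⟨Nat.prime_of_mem_primeFactors hpf, hpNm, hNm0⟩
      · intro p hpmem hpnot
        have hp : p.Prime := Nat.prime_of_mem_primeFactors hpmem
        have hpNm : p ∣ N / m := (Nat.mem_primeFactors.mp hpmem).2.1
        have hpf : ¬ p ∣ f := by
          intro h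
          exact hpnot (Finset.mem_filter.mpr
            ⟨Nat.mem_primeFactors.mpr ⟨hp, h, hf0⟩, hpNm⟩)
        unfold ppart
        rw [Nat.factorization_eq_zero_of_not_dvd hpf, pow_zero]
        norm_num
    rw [hmain, hone, mul_one]
  rw [hA]
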